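/- Let T be a directed tree with n vertices, S a convex point set of size n, and u a vertex of T. Let T_1, ..., T_k be the connected components of T after removing u and its incident edges. In any upward planar straight-line embedding of T into S, for each i the vertices of T_i are mapped to a set of consecutive points of S (consecutive in the cyclic order along the convex hull). -/

import Mathlib

open Finset

noncomputable section

/-- 2D cross product / determinant. -/
def det2 (u v : ℝ × ℝ) : ℝ := u.1 * v.2 - u.2 * v.1

/-- General position: pairwise distinct y-coordinates, no three collinear. -/
def GenPos (S : Finset (ℝ × ℝ)) : Prop :=
  (∀ p ∈ S, ∀ q ∈ S, p ≠ q → p.2 ≠ q.2) ∧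
  (∀ p ∈ S, ∀ q ∈ S, ∀ r ∈ S, p ≠ q → p ≠ r → q ≠ r →
    ¬ Collinear ℝ ({p, q, r} : Set (ℝ × ℝ)))

/-- Convex position: general position and no point in the convex hull of the others. -/
def ConvexPos (S : Finset (ℝ × ℝ)) : Prop :=
  GenPos S ∧ ∀ p ∈ S, p ∉ convexHull ℝ (↑(S.erase p) : Set (ℝ × ℝ))

def IsLowest (S : Finset (ℝ × ℝ)) (b : ℝ × ℝ) : Prop := b ∈ S ∧ ∀ p ∈ S, b.2 ≤ p.2

def IsHighest (S : Finset (ℝ × ℝ)) (t : ℝ × ℝ) : Prop := t ∈ S ∧ ∀ p ∈ S, p.2 ≤ t.2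

/-- One-sided convex point set: all points other than the lowest point `b` and the
highest point `t` lie strictly on one side of the line through `b` and `t`. -/
def OneSided (S : Finset (ℝ × ℝ)) : Prop :=
  ConvexPos S ∧ ∃ b t, IsLowest S b ∧ IsHighest S t ∧
    ((∀ p ∈ S, p ≠ b → p ≠ t → 0 < det2 (t - b) (p - b)) ∨
     (∀ p ∈ S, p ≠ b → p ≠ t → det2 (t - b) (p - b) < 0))

/-- Upward planar straight-line embedding of a digraph (given by its arc relation `Adj`)
into the point set `S` via the vertex placement `f`: vertices go injectively to points of
`S`, every arc goes strictly upward, and two (distinct) arcs may only meet at common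
endpoints. -/
def UPSE {V : Type*} (Adj : V → V → Prop) (S : Finset (ℝ × ℝ)) (f : V → ℝ × ℝ) : Prop :=
  Function.Injective f ∧ (∀ v, f v ∈ S) ∧
  (∀ u v, Adj u v → (f u).2 < (f v).2) ∧
  (∀ a b c d, Adj a b → Adj c d → (a, b) ≠ (c, d) →
    ∀ p, p ∈ segment ℝ (f a) (f b) → p ∈ segment ℝ (f c) (f d) →
      p ∈ ({f a, f b} : Set (ℝ × ℝ)) ∧ p ∈ ({f c, f d} : Set (ℝ × ℝ)))

/-- A directed tree: an orientation (no 2-cycles, no loops) whose underlying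
undirected graph is a tree. -/
def IsDirTree {V : Type*} (Adj : V → V → Prop) : Prop :=
  (∀ u v, Adj u v → ¬ Adj v u) ∧ (∀ v, ¬ Adj v v) ∧
  (SimpleGraph.fromRel Adj).IsTree

/-- Switch digraph: every vertex is a source or a sink. -/
def IsSwitch {V : Type*} (Adj : V → V → Prop) : Prop :=
  ∀ v, (∀ u, ¬ Adj u v) ∨ (∀ u, ¬ Adj v u)

/-- `w` is reachable from `v` in the underlying undirected graph by a walk avoiding `u`;
the components of `T - u` are exactly the classes of this relation on `V \ {u}`. -/
def ReachAvoiding {V : Type*} (Adj : V → V → Prop) (u v w : V) : Prop :=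
  ∃ p : (SimpleGraph.fromRel Adj).Walk v w, u ∉ p.support

/-- `A ⊆ S` consists of consecutive points of the convex point set `S`: it can be cut
off from the rest of `S` by a line (linear separation, which for points in convex
position is equivalent to contiguity in the cyclic order along the convex hull). -/
def ConsecutiveIn (A : Set (ℝ × ℝ)) (S : Finset (ℝ × ℝ)) : Prop :=
  ∃ (φ : (ℝ × ℝ) →ₗ[ℝ] ℝ) (c : ℝ),
    (∀ p ∈ A, c < φ p) ∧ ∀ p ∈ (↑S : Set (ℝ × ℝ)) \ A, φ p < c

namespace UPSEAux

abbrev E2 := ℝ × ℝ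

/-- det2 with fixed first argument, as a linear map. -/
def detL (d : E2) : E2 →ₗ[ℝ] ℝ where
  toFun v := det2 d v
  map_add' x y := by simp only [det2, Prod.fst_add, Prod.snd_add]; ring
  map_smul' c x := by
    simp only [det2, Prod.smul_fst, Prod.smul_snd, smul_eq_mul, RingHom.id_apply]; ring

lemma detL_apply (d v : E2) : detL d v = det2 d v := rfl

lemma det2_self (d : E2) : det2 d d = 0 := by simp only [det2]; ring

lemma exists_smul_of_det2 {u v : E2} (hu : u ≠ 0) (h : det2 u v = 0) : ∃ s : ℝ, v = s • u := by
  unfold det2 at h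
  rcases eq_or_ne u.1 0 with h1 | h1
  · have h2 : u.2 ≠ 0 := by
      intro h2; exact hu (Prod.ext h1 h2)
    have hv1 : v.1 = 0 := by
      rw [h1] at h
      have : u.2 * v.1 = 0 := by linarith
      rcases mul_eq_zero.1 this with h' | h'
      · exact absurd h' h2
      · exact h'
    refine ⟨v.2 / u.2, Prod.ext ?_ ?_⟩
    · simp only [Prod.smul_fst, smul_eq_mul, h1, mul_zero, hv1]
    · simp only [Prod.smul_snd, smul_eq_mul]; field_simp
  · refine ⟨v.1 / u.1, Prod.ext ?_ ?_⟩
    · simp only [Prod.smul_fst, smul_eq_mul]; field_simp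
    · simp only [Prod.smul_snd, smul_eq_mul]
      field_simp
      nlinarith [h]

/-- points on a common parametrized line: middle parameter gives segment membership. -/
lemma mem_segment_param (a d : E2) {tx ty tw : ℝ} (h1 : tx ≤ tw) (h2 : tw ≤ ty) :
    a + tw • d ∈ segment ℝ (a + tx • d) (a + ty • d) := by
  rcases eq_or_lt_of_le (h1.trans h2) with he | hlt
  · have : tw = tx := le_antisymm (he ▸ h2) h1
    subst this; rw [← he]
    exact left_mem_segment _ _ _
  · have hd0 : (0:ℝ) < ty - tx := by linarith
    refine ⟨(ty - tw) / (ty - tx), (tw - tx) / (ty - tx), div_nonneg (by linarith) hd0.le,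
      div_nonneg (by linarith) hd0.le, ?_, ?_⟩
    · field_simp; ring
    · have hd : ty - tx ≠ 0 := by linarith
      have e1 : (ty - tw) / (ty - tx) * tx + (tw - tx) / (ty - tx) * ty = tw := by
        field_simp; ring
      have e2 : (ty - tw) / (ty - tx) + (tw - tx) / (ty - tx) = 1 := by field_simp; ring
      linear_combination (norm := module) e1 • d + e2 • a

/-- If q is between p and z, and z is between q and w, then q is between p and w. -/
lemma segment_absorb {p q z w : E2} (h1 : q ∈ segment ℝ p z) (h2 : z ∈ segment ℝ q w)
    (hqz : q ≠ z) : q ∈ segment ℝ p w := by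
  obtain ⟨a1, b1, ha1, hb1, hab1, he1⟩ := h1
  obtain ⟨a2, b2, ha2, hb2, hab2, he2⟩ := h2
  have hne : 1 - b1 * a2 ≠ 0 := by
    rcases lt_or_eq_of_le (mul_le_one₀ (by linarith) ha2 (by linarith) : b1 * a2 ≤ 1) with h | h
    · linarith
    · exfalso
      have hb1' : b1 = 1 := by nlinarith
      have ha2' : a2 = 1 := by nlinarith
      have ha1' : a1 = 0 := by linarith
      have hb2' : b2 = 0 := by linarith
      simp only [ha1', hb1', ha2', hb2'] at he1 he2
      apply hqz
      rw [← he1]; rw [← he2]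
      module
  have hpos : 0 < 1 - b1 * a2 := by
    rcases lt_or_eq_of_le (mul_le_one₀ (by linarith) ha2 (by linarith) : b1 * a2 ≤ 1) with h | h
    · linarith
    · exact absurd (by linarith) hne
  have key : (1 - b1 * a2) • q = a1 • p + (b1 * b2) • w := by
    linear_combination (norm := module) - he1 - b1 • he2
  refine ⟨a1 / (1 - b1 * a2), b1 * b2 / (1 - b1 * a2), div_nonneg ha1 hpos.le,
    div_nonneg (mul_nonneg hb1 hb2) hpos.le, ?_, ?_⟩
  · field_simp; nlinarith
  · calc (a1 / (1 - b1 * a2)) • p + (b1 * b2 / (1 - b1 * a2)) • w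
        = (1 - b1 * a2)⁻¹ • (a1 • p + (b1 * b2) • w) := by
          rw [smul_add, smul_smul, smul_smul, div_eq_inv_mul, div_eq_inv_mul]
      _ = (1 - b1 * a2)⁻¹ • ((1 - b1 * a2) • q) := by rw [key]
      _ = q := by rw [smul_smul, inv_mul_cancel₀ hne, one_smul]

lemma det2_smul_left (s : ℝ) (u v : E2) : det2 (s • u) v = s * det2 u v := by
  simp only [det2, Prod.smul_fst, Prod.smul_snd, smul_eq_mul]; ring

lemma det2_ne_zero_of_genpos {S : Finset E2} (hS : GenPos S) {p q r : E2}
    (hp : p ∈ S) (hq : q ∈ S) (hr : r ∈ S) (hpq : p ≠ q) (hpr : p ≠ r) (hqr : q ≠ r) :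
    det2 (q - p) (r - p) ≠ 0 := by
  intro h0
  apply hS.2 p hp q hq r hr hpq hpr hqr
  rw [collinear_iff_exists_forall_eq_smul_vadd]
  refine ⟨p, q - p, ?_⟩
  intro x hx
  have hd : q - p ≠ 0 := sub_ne_zero.mpr (Ne.symm hpq)
  rcases hx with rfl | rfl | rfl
  · exact ⟨0, by simp⟩
  · exact ⟨1, by simp⟩
  · obtain ⟨s, hs⟩ := exists_smul_of_det2 hd h0
    exact ⟨s, by rw [← hs]; simp⟩

lemma mem_segment_of_det {S : Finset E2} (hS : ConvexPos S) {p q z : E2}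
    (hp : p ∈ S) (hq : q ∈ S) (hpq : p ≠ q) (hz : z ∈ convexHull ℝ (↑S : Set E2))
    (h0 : det2 (q - p) (z - p) = 0) : z ∈ segment ℝ p q := by
  have hd : q - p ≠ 0 := sub_ne_zero.mpr (Ne.symm hpq)
  obtain ⟨t, ht⟩ := exists_smul_of_det2 hd h0
  have hzd : z = p + t • (q - p) := by linear_combination (norm := module) ht
  have e1 : p + (1:ℝ) • (q - p) = q := by module
  have e0 : p + (0:ℝ) • (q - p) = p := by module
  by_cases h01 : 0 ≤ t ∧ t ≤ 1
  · have h2 := mem_segment_param p (q - p) h01.1 h01.2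
    rw [e0, e1, ← hzd] at h2
    exact h2
  · exfalso
    rcases not_and_or.mp h01 with h' | h'
    · -- t < 0 : p is inside, contradiction
      have ht0 : t < 0 := lt_of_not_ge h'
      have hznep : p ≠ z := by
        intro he
        rw [← he] at ht
        have : t • (q - p) = 0 := by
          rw [← ht]; simp
        rcases smul_eq_zero.mp this with h'' | h''
        · exact absurd h'' (by linarith)
        · exact hd h''
      have hne : (↑(S.erase p) : Set E2).Nonempty :=
        ⟨q, by simp [Finset.mem_erase, Ne.symm hpq, hq]⟩
      have hcoe : (↑S : Set E2) = insert p ↑(S.erase p) := by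
        conv_lhs => rw [← Finset.insert_erase hp]
        rw [Finset.coe_insert]
      rw [hcoe, convexHull_insert hne, mem_convexJoin] at hz
      obtain ⟨x, hx, w, hw, hzseg⟩ := hz
      rw [Set.mem_singleton_iff] at hx
      rw [hx] at hzseg
      have hpseg : p ∈ segment ℝ z q := by
        have h3 := mem_segment_param p (q - p) (le_of_lt ht0) (zero_le_one)
        rw [e0, e1, ← hzd] at h3
        exact h3
      have hpseg' : p ∈ segment ℝ q z := by rwa [segment_symm] at hpseg
      have habs : p ∈ segment ℝ q w := segment_absorb hpseg' hzseg hznep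
      refine hS.2 p hp ((convex_convexHull ℝ _).segment_subset ?_ hw habs)
      exact subset_convexHull ℝ _ (by simp [Finset.mem_erase, Ne.symm hpq, hq])
    · -- t > 1 : q is inside, contradiction
      have ht1 : 1 < t := lt_of_not_ge h'
      have hzneq : q ≠ z := by
        intro he
        rw [← he] at hzd
        have : (t - 1) • (q - p) = 0 := by linear_combination (norm := module) - hzd
        rcases smul_eq_zero.mp this with h'' | h''
        · exact absurd h'' (by intro hh; linarith [hh])
        · exact hd h''
      have hne : (↑(S.erase q) : Set E2).Nonempty :=
        ⟨p, by simp [Finset.mem_erase, hpq, hp]⟩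
      have hcoe : (↑S : Set E2) = insert q ↑(S.erase q) := by
        conv_lhs => rw [← Finset.insert_erase hq]
        rw [Finset.coe_insert]
      rw [hcoe, convexHull_insert hne, mem_convexJoin] at hz
      obtain ⟨x, hx, w, hw, hzseg⟩ := hz
      rw [Set.mem_singleton_iff] at hx
      rw [hx] at hzseg
      have hqseg : q ∈ segment ℝ p z := by
        have h3 := mem_segment_param p (q - p) (zero_le_one) ht1.le
        rw [e0, e1, ← hzd] at h3
        exact h3
      have habs : q ∈ segment ℝ p w := segment_absorb hqseg hzseg hzneq
      refine hS.2 q hq ((convex_convexHull ℝ _).segment_subset ?_ hw habs)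
      exact subset_convexHull ℝ _ (by simp [Finset.mem_erase, hpq, hp])

/-- strict sign change along a segment forces a crossing with the chord pq. -/
lemma cross_of_signs {S : Finset E2} (hS : ConvexPos S) {p q r s : E2}
    (hp : p ∈ S) (hq : q ∈ S) (hpq : p ≠ q)
    (hr : r ∈ convexHull ℝ (↑S : Set E2)) (hs : s ∈ convexHull ℝ (↑S : Set E2))
    (h1 : det2 (q - p) (r - p) ≤ 0) (h2 : 0 ≤ det2 (q - p) (s - p)) :
    ∃ ζ, ζ ∈ segment ℝ r s ∧ ζ ∈ segment ℝ p q := by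
  set α := det2 (q - p) (r - p) with hα
  set β := det2 (q - p) (s - p) with hβ
  rcases eq_or_lt_of_le (le_trans h1 h2) with he | hlt
  · -- α = β = 0
    have hα0 : α = 0 := le_antisymm h1 (he ▸ h2)
    exact ⟨r, left_mem_segment ℝ r s, mem_segment_of_det hS hp hq hpq hr hα0⟩
  · set τ := -α / (β - α) with hτ
    have hβα : 0 < β - α := by linarith
    have hτ0 : 0 ≤ τ := div_nonneg (by linarith) hβα.le
    have hτ1 : τ ≤ 1 := by
      rw [div_le_one hβα]; linarith
    set ζ := r + τ • (s - r) with hζ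
    have hζseg : ζ ∈ segment ℝ r s := by
      have h3 := mem_segment_param r (s - r) hτ0 hτ1
      have e0 : r + (0:ℝ) • (s - r) = r := by module
      have e1 : r + (1:ℝ) • (s - r) = s := by module
      rw [e0, e1] at h3
      exact h3
    have hζS : ζ ∈ convexHull ℝ (↑S : Set E2) :=
      (convex_convexHull ℝ _).segment_subset hr hs hζseg
    have hdet : det2 (q - p) (ζ - p) = 0 := by
      have hcomb : ζ - p = (1 - τ) • (r - p) + τ • (s - p) := by
        rw [hζ]; module
      have : det2 (q - p) (ζ - p) = (1 - τ) * α + τ * β := by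
        show detL (q - p) (ζ - p) = _
        rw [hcomb, map_add, map_smul, map_smul]
        simp only [detL_apply, smul_eq_mul, hα, hβ]
      rw [this]
      have hmc : τ * (β - α) = -α := div_mul_cancel₀ _ hβα.ne'
      nlinarith [hmc]
    exact ⟨ζ, hζseg, mem_segment_of_det hS hp hq hpq hζS hdet⟩

lemma sign_pick (B : Finset E2) (μ g : E2 → ℝ)
    (h0 : ∀ b ∈ B, 0 ≤ μ b) (h1 : ∑ b ∈ B, μ b = 1) (h2 : ∑ b ∈ B, μ b * g b = 0) :
    (∃ b ∈ B, 0 < μ b ∧ g b = 0) ∨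
      ∃ b ∈ B, ∃ b' ∈ B, 0 < μ b ∧ 0 < μ b' ∧ g b < 0 ∧ 0 < g b' := by
  by_contra hc
  push_neg at hc
  obtain ⟨hz, hpair⟩ := hc
  have hone : (∑ b ∈ B, μ b) ≠ 0 := by rw [h1]; exact one_ne_zero
  obtain ⟨b0, hb0B, hb0⟩ := Finset.exists_ne_zero_of_sum_ne_zero hone
  have hμb0 : 0 < μ b0 := lt_of_le_of_ne (h0 _ hb0B) (Ne.symm hb0)
  have hg0 : g b0 ≠ 0 := hz b0 hb0B hμb0
  rcases lt_or_gt_of_ne hg0 with hneg | hpos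
  · -- all terms ≤ 0, and b0 term < 0
    have hterm : ∀ b ∈ B, μ b * g b ≤ 0 := by
      intro b hb
      rcases eq_or_lt_of_le (h0 b hb) with he | hμ
      · rw [← he]; simp
      · have hgb : g b ≠ 0 := hz b hb hμ
        rcases lt_or_gt_of_ne hgb with h' | h'
        · exact mul_nonpos_iff.mpr (Or.inl ⟨hμ.le, h'.le⟩)
        · exact absurd (hpair b0 hb0B b hb hμb0 hμ hneg) (not_le.mpr h')
    have hsum : ∑ b ∈ B, μ b * g b < 0 := by
      calc ∑ b ∈ B, μ b * g b ≤ ∑ b ∈ B \ {b0}, (μ b * g b) + μ b0 * g b0 := by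
            rw [Finset.sum_eq_sum_sdiff_singleton_add hb0B]
        _ < 0 := by
            have h4 : ∑ b ∈ B \ {b0}, (μ b * g b) ≤ 0 :=
              Finset.sum_nonpos (fun b hb => hterm b (Finset.mem_sdiff.mp hb).1)
            nlinarith [mul_pos hμb0 (neg_pos.mpr hneg)]
    exact absurd h2 (ne_of_lt hsum)
  · have hterm : ∀ b ∈ B, 0 ≤ μ b * g b := by
      intro b hb
      rcases eq_or_lt_of_le (h0 b hb) with he | hμ
      · rw [← he]; simp
      · have hgb : g b ≠ 0 := hz b hb hμ
        rcases lt_or_gt_of_ne hgb with h' | h'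
        · exact absurd (hpair b hb b0 hb0B hμ hμb0 h') (not_le.mpr hpos)
        · exact (mul_pos hμ h').le
    have hsum : 0 < ∑ b ∈ B, μ b * g b := by
      calc (0:ℝ) < μ b0 * g b0 + ∑ b ∈ B \ {b0}, (μ b * g b) := by
            have h4 : (0:ℝ) ≤ ∑ b ∈ B \ {b0}, (μ b * g b) :=
              Finset.sum_nonneg (fun b hb => hterm b (Finset.mem_sdiff.mp hb).1)
            nlinarith [mul_pos hμb0 hpos]
        _ = ∑ b ∈ B, μ b * g b := by
            rw [Finset.sum_eq_sum_sdiff_singleton_add hb0B]; ring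
    exact absurd h2 (ne_of_gt hsum)

lemma conv_mem_sum {B : Finset E2} {z : E2} (hz : z ∈ convexHull ℝ (↑B : Set E2)) :
    ∃ μ : E2 → ℝ, (∀ b ∈ B, 0 ≤ μ b) ∧ ∑ b ∈ B, μ b = 1 ∧ ∑ b ∈ B, μ b • b = z := by
  rw [Finset.convexHull_eq] at hz
  obtain ⟨w, h1, h2, h3⟩ := hz
  refine ⟨w, h1, h2, ?_⟩
  rw [← h3, Finset.centerMass_eq_of_sum_1 _ _ h2]
  simp

lemma det_sum {B : Finset E2} {μ : E2 → ℝ} {z a d : E2}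
    (h1 : ∑ b ∈ B, μ b = 1) (h2 : ∑ b ∈ B, μ b • b = z) :
    ∑ b ∈ B, μ b * det2 d (b - a) = det2 d (z - a) := by
  have hz : z - a = ∑ b ∈ B, μ b • (b - a) := by
    simp only [smul_sub, Finset.sum_sub_distrib, h2, ← Finset.sum_smul, h1, one_smul]
  show _ = detL d (z - a)
  rw [hz, map_sum]
  simp only [map_smul, detL_apply, smul_eq_mul]

lemma expand {S : Finset E2} (hS : ConvexPos S) (A B : Finset E2)
    (hAS : A ⊆ S) (hBS : B ⊆ S)
    (hdisj : ∀ a ∈ A, a ∉ B)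
    (hchord : ∀ a ∈ A, ∀ a' ∈ A, ∀ b ∈ B, ∀ b' ∈ B, ∀ x : E2,
      x ∈ segment ℝ a a' → x ∈ segment ℝ b b' → False)
    (hA2 : 2 ≤ A.card) (hside : 3 ≤ B.card ∨ A.card = 2)
    (ih : ∀ A' B' : Finset E2, A' ⊆ A → B' ⊆ B → A'.card + B'.card < A.card + B.card →
      ∀ x : E2, x ∈ convexHull ℝ (↑A' : Set E2) → x ∈ convexHull ℝ (↑B' : Set E2) → False)
    (z : E2) (hzA : z ∈ convexHull ℝ (↑A : Set E2)) (hzB : z ∈ convexHull ℝ (↑B : Set E2)) :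
    False := by
  obtain ⟨a1, ha1⟩ := Finset.card_pos.mp (by omega : 0 < A.card)
  set A' := A.erase a1 with hA'
  have hA'card : A'.card = A.card - 1 := Finset.card_erase_of_mem ha1
  have hA'sub : A' ⊆ A := Finset.erase_subset _ _
  have hA'ne : (↑A' : Set E2).Nonempty := by
    have : 0 < A'.card := by omega
    obtain ⟨x, hx⟩ := Finset.card_pos.mp this
    exact ⟨x, hx⟩
  have hcoe : (↑A : Set E2) = insert a1 ↑A' := by
    conv_lhs => rw [← Finset.insert_erase ha1]
    rw [Finset.coe_insert]
  -- basic separation facts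
  have hBnotA : ∀ b ∈ B, b ∉ A := fun b hb hbA => hdisj b hbA hb
  have hBpos : 0 < B.card := by
    rcases hside with h | h
    · omega
    · by_contra hc
      push_neg at hc
      interval_cases hB : B.card
      · rw [Finset.card_eq_zero] at hB
        subst hB
        simp [convexHull_empty] at hzB
  have hBeraseSub : ∀ a ∈ A, (↑B : Set E2) ⊆ (↑(S.erase a) : Set E2) := by
    intro a ha b hb
    simp only [Finset.coe_erase, Set.mem_diff, Set.mem_singleton_iff]
    have hbB : b ∈ B := hb
    exact ⟨hBS hbB, fun he => hdisj a ha (he ▸ hbB)⟩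
  have hAeraseSub : ∀ b ∈ B, (↑A : Set E2) ⊆ (↑(S.erase b) : Set E2) := by
    intro b hb a ha
    simp only [Finset.coe_erase, Set.mem_diff, Set.mem_singleton_iff]
    have haA : a ∈ A := ha
    exact ⟨hAS haA, fun he => hdisj a haA (he ▸ hb)⟩
  -- decompose z over insert a1 A'
  rw [hcoe, convexHull_insert hA'ne, mem_convexJoin] at hzA
  obtain ⟨x, hx, w, hw, hzseg⟩ := hzA
  rw [Set.mem_singleton_iff] at hx
  rw [hx] at hzseg
  clear hx
  by_cases hzA' : z ∈ convexHull ℝ (↑A' : Set E2)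
  · exact ih A' B hA'sub (subset_refl _) (by omega) z hzA' hzB
  by_cases hz1 : z = a1
  · refine hS.2 a1 (hAS ha1) ?_
    exact convexHull_mono (hBeraseSub a1 ha1) (hz1 ▸ hzB)
  obtain ⟨c1, c2, hc1, hc2, hc12, hzeq⟩ := hzseg
  have hwa : w ≠ a1 := by
    intro he
    apply hz1
    rw [he] at hzeq
    rw [← hzeq]
    have : c1 • a1 + c2 • a1 = (c1 + c2) • a1 := by module
    rw [this, hc12, one_smul]
  set d := w - a1 with hdd
  have hd : d ≠ 0 := sub_ne_zero.mpr hwa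
  set t := c2 with htdef
  have ht1 : t ≤ 1 := by linarith
  have htne1 : t ≠ 1 := by
    intro he
    apply hzA'
    have hc10 : c1 = 0 := by linarith
    rw [hc10, he] at hzeq
    simp only [zero_smul, one_smul, zero_add] at hzeq
    rw [← hzeq]
    exact hw
  have htne0 : t ≠ 0 := by
    intro he
    apply hz1
    have hc11 : c1 = 1 := by rw [htdef] at he; linarith
    rw [hc11, he] at hzeq
    simp only [one_smul, zero_smul, add_zero] at hzeq
    exact hzeq.symm
  have ht0 : 0 < t := lt_of_le_of_ne hc2 (Ne.symm htne0)
  have ht1' : t < 1 := lt_of_le_of_ne ht1 htne1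
  have hzd : z = a1 + t • d := by
    rw [hdd]
    linear_combination (norm := module) - hzeq + hc12 • a1
  -- z as a convex combination over B
  obtain ⟨μ, hμ0, hμ1, hμz⟩ := conv_mem_sum hzB
  have hz0 : det2 d (z - a1) = 0 := by
    rw [hzd]
    have h5 : a1 + t • d - a1 = t • d := by module
    rw [h5]
    show detL d (t • d) = 0
    rw [map_smul]
    simp [detL_apply, det2_self]
  have hsum : ∑ b ∈ B, μ b * det2 d (b - a1) = 0 := (det_sum hμ1 hμz).trans hz0
  have hwS : w ∈ convexHull ℝ (↑S : Set E2) :=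
    convexHull_mono (Set.Subset.trans (Finset.coe_subset.mpr hA'sub) (Finset.coe_subset.mpr hAS)) hw
  have hwA : w ∈ convexHull ℝ (↑A : Set E2) :=
    convexHull_mono (Finset.coe_subset.mpr hA'sub) hw
  rcases sign_pick B μ (fun b => det2 d (b - a1)) hμ0 hμ1 hsum with
    ⟨b0, hb0B, hμb0, hg0⟩ | ⟨b, hbB, b', hb'B, hμb, hμb', hgb, hgb'⟩
  · -- collinear case : b0 on the line a1-w
    have hga : a1 ≠ b0 := fun he => hdisj a1 ha1 (he ▸ hb0B)
    obtain ⟨sc, hsc⟩ := exists_smul_of_det2 hd hg0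
    have hwseg : w ∈ segment ℝ a1 b0 := by
      refine mem_segment_of_det hS (hAS ha1) (hBS hb0B) hga hwS ?_
      rw [hsc, det2_smul_left]
      have h6 : w - a1 = d := by rw [hdd]
      rw [h6, det2_self, mul_zero]
    obtain ⟨κ1, κ2, hκ1, hκ2, hκsum, hκeq⟩ := hwseg
    have e1 : w - a1 = κ2 • (b0 - a1) := by
      linear_combination (norm := module) - hκeq + hκsum • a1
    have e2 : (1 - κ2 * sc) • d = 0 := by
      rw [hdd]
      linear_combination (norm := module) e1 + κ2 • hsc
    have hκs : κ2 * sc = 1 := by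
      rcases smul_eq_zero.mp e2 with h' | h'
      · linarith
      · exact absurd h' hd
    have hκ2pos : 0 < κ2 := by
      rcases lt_or_eq_of_le hκ2 with h' | h'
      · exact h'
      · exfalso; rw [← h'] at hκs; simp at hκs
    have hsge : 1 ≤ sc := by nlinarith
    -- w lies between z and b0 on the line, hence in conv B
    have hwzb : w ∈ segment ℝ z b0 := by
      have h7 := mem_segment_param a1 d (le_of_lt ht1') hsge
      have e3 : a1 + (1:ℝ) • d = w := by rw [hdd]; module
      have e4 : a1 + sc • d = b0 := by rw [hdd]; linear_combination (norm := module) - hsc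
      rw [e3, e4, ← hzd] at h7
      exact h7
    have hwB : w ∈ convexHull ℝ (↑B : Set E2) :=
      (convex_convexHull ℝ _).segment_subset hzB (subset_convexHull ℝ _ hb0B) hwzb
    exact ih A' B hA'sub (subset_refl _) (by omega) w hw hwB
  · -- crossing case
    set gb := det2 d (b - a1) with hgbdef
    set gb' := det2 d (b' - a1) with hgb'def
    have hβα : 0 < gb' - gb := by linarith
    set τ := -gb / (gb' - gb) with hτ
    have hτ0 : 0 ≤ τ := div_nonneg (by linarith) hβα.le
    have hτ1 : τ ≤ 1 := by rw [div_le_one hβα]; linarith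
    set ζ := b + τ • (b' - b) with hζ
    have hζseg : ζ ∈ segment ℝ b b' := by
      have h3 := mem_segment_param b (b' - b) hτ0 hτ1
      have e0 : b + (0:ℝ) • (b' - b) = b := by module
      have e1 : b + (1:ℝ) • (b' - b) = b' := by module
      rw [e0, e1] at h3
      exact h3
    have hζB : ζ ∈ convexHull ℝ (↑B : Set E2) :=
      (convex_convexHull ℝ _).segment_subset (subset_convexHull ℝ _ hbB)
        (subset_convexHull ℝ _ hb'B) hζseg
    have hζdet : det2 d (ζ - a1) = 0 := by
      have hcomb : ζ - a1 = (1 - τ) • (b - a1) + τ • (b' - a1) := by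
        rw [hζ]; module
      have h8 : det2 d (ζ - a1) = (1 - τ) * gb + τ * gb' := by
        show detL d (ζ - a1) = _
        rw [hcomb, map_add, map_smul, map_smul]
        simp only [detL_apply, smul_eq_mul, hgbdef, hgb'def]
      rw [h8]
      have hmc : τ * (gb' - gb) = -gb := div_mul_cancel₀ _ hβα.ne'
      nlinarith [hmc]
    obtain ⟨tζ, htζ⟩ := exists_smul_of_det2 hd hζdet
    have hζeq : ζ = a1 + tζ • d := by linear_combination (norm := module) htζ
    by_cases htζ0 : tζ ≤ 0
    · -- a1 inside conv B : contradiction with convex position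
      have h9 := mem_segment_param a1 d htζ0 (le_of_lt ht0)
      have e0 : a1 + (0:ℝ) • d = a1 := by module
      rw [e0, ← hζeq, ← hzd] at h9
      have : a1 ∈ convexHull ℝ (↑B : Set E2) :=
        (convex_convexHull ℝ _).segment_subset hζB hzB h9
      exact hS.2 a1 (hAS ha1) (convexHull_mono (hBeraseSub a1 ha1) this)
    push_neg at htζ0
    by_cases htζ1 : tζ ≤ 1
    · -- ζ on segment a1 w : inside conv A
      have h9 := mem_segment_param a1 d htζ0.le htζ1
      have e0 : a1 + (0:ℝ) • d = a1 := by module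
      have e3 : a1 + (1:ℝ) • d = w := by rw [hdd]; module
      rw [e0, e3, ← hζeq] at h9
      rcases hside with hB3 | hA2'
      · have hζA : ζ ∈ convexHull ℝ (↑A : Set E2) :=
          (convex_convexHull ℝ _).segment_subset (subset_convexHull ℝ _ ha1) hwA h9
        have hbbsub : ({b, b'} : Finset E2) ⊆ B := by
          intro x hx
          rcases Finset.mem_insert.mp hx with rfl | hx'
          · exact hbB
          · rw [Finset.mem_singleton.mp hx']; exact hb'B
        have hbbcard : ({b, b'} : Finset E2).card ≤ 2 := by
          apply le_trans (Finset.card_insert_le _ _)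
          simp
        have hζbb : ζ ∈ convexHull ℝ (↑({b, b'} : Finset E2) : Set E2) := by
          have : (↑({b, b'} : Finset E2) : Set E2) = {b, b'} := by simp
          rw [this, convexHull_pair]
          exact hζseg
        exact ih A {b, b'} (subset_refl _) hbbsub (by omega) ζ hζA hζbb
      · -- A has exactly two elements : pure chord crossing
        have hA'1 : A'.card = 1 := by omega
        obtain ⟨a2, ha2⟩ := Finset.card_eq_one.mp hA'1
        have hwa2 : w = a2 := by
          rw [ha2] at hw
          simpa [convexHull_singleton] using hw
        have ha2A : a2 ∈ A := hA'sub (by rw [ha2]; exact Finset.mem_singleton_self _)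
        rw [hwa2] at h9
        exact hchord a1 ha1 a2 ha2A b hbB b' hb'B ζ h9 hζseg
    · -- w between z and ζ : inside conv B
      push_neg at htζ1
      have h9 := mem_segment_param a1 d ht1'.le htζ1.le
      have e3 : a1 + (1:ℝ) • d = w := by rw [hdd]; module
      rw [e3, ← hζeq, ← hzd] at h9
      have hwB : w ∈ convexHull ℝ (↑B : Set E2) :=
        (convex_convexHull ℝ _).segment_subset hzB hζB h9
      exact ih A' B hA'sub (subset_refl _) (by omega) w hw hwB

lemma hull_disjoint {S : Finset E2} (hS : ConvexPos S) :
    ∀ (n : ℕ) (A B : Finset E2), A.card + B.card ≤ n → A ⊆ S → B ⊆ S →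
      (∀ a ∈ A, a ∉ B) →
      (∀ a ∈ A, ∀ a' ∈ A, ∀ b ∈ B, ∀ b' ∈ B, ∀ x : E2,
        x ∈ segment ℝ a a' → x ∈ segment ℝ b b' → False) →
      ∀ z : E2, z ∈ convexHull ℝ (↑A : Set E2) → z ∈ convexHull ℝ (↑B : Set E2) → False := by
  intro n
  induction n with
  | zero =>
    intro A B hn _ _ _ _ z hzA _
    have : A = ∅ := Finset.card_eq_zero.mp (by omega)
    subst this
    simp only [Finset.coe_empty, convexHull_empty] at hzA
    exact hzA
  | succ n IH =>
    intro A B hn hAS hBS hdisj hchord z hzA hzB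
    have hBsubErase : ∀ a ∈ A, (↑B : Set E2) ⊆ (↑(S.erase a) : Set E2) := by
      intro a ha b hb
      simp only [Finset.coe_erase, Set.mem_diff, Set.mem_singleton_iff]
      have hbB : b ∈ B := hb
      exact ⟨hBS hbB, fun he => hdisj a ha (he ▸ hbB)⟩
    have hAsubErase : ∀ b ∈ B, (↑A : Set E2) ⊆ (↑(S.erase b) : Set E2) := by
      intro b hb a ha
      simp only [Finset.coe_erase, Set.mem_diff, Set.mem_singleton_iff]
      have haA : a ∈ A := ha
      exact ⟨hAS haA, fun he => hdisj a haA (he ▸ hb)⟩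
    by_cases hA0 : A.card = 0
    · have : A = ∅ := Finset.card_eq_zero.mp hA0
      subst this
      simp only [Finset.coe_empty, convexHull_empty] at hzA
      exact hzA
    by_cases hB0 : B.card = 0
    · have : B = ∅ := Finset.card_eq_zero.mp hB0
      subst this
      simp only [Finset.coe_empty, convexHull_empty] at hzB
      exact hzB
    by_cases hA1 : A.card = 1
    · obtain ⟨a, ha⟩ := Finset.card_eq_one.mp hA1
      subst ha
      have hza : z = a := by simpa [convexHull_singleton] using hzA
      subst hza
      exact hS.2 z (hAS (Finset.mem_singleton_self _))
        (convexHull_mono (hBsubErase z (Finset.mem_singleton_self _)) hzB)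
    by_cases hB1 : B.card = 1
    · obtain ⟨b, hb⟩ := Finset.card_eq_one.mp hB1
      subst hb
      have hzb : z = b := by simpa [convexHull_singleton] using hzB
      subst hzb
      exact hS.2 z (hBS (Finset.mem_singleton_self _))
        (convexHull_mono (hAsubErase z (Finset.mem_singleton_self _)) hzA)
    have ihgen : ∀ A' B' : Finset E2, A' ⊆ A → B' ⊆ B →
        A'.card + B'.card < A.card + B.card →
        ∀ x : E2, x ∈ convexHull ℝ (↑A' : Set E2) → x ∈ convexHull ℝ (↑B' : Set E2) → False := by
      intro A' B' hA' hB' hlt x hx1 hx2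
      exact IH A' B' (by omega) (hA'.trans hAS) (hB'.trans hBS)
        (fun a ha hb => hdisj a (hA' ha) (hB' hb))
        (fun a ha a' ha' b hb b' hb' x' h1 h2 =>
          hchord a (hA' ha) a' (hA' ha') b (hB' hb) b' (hB' hb') x' h1 h2) x hx1 hx2
    by_cases hB3 : 3 ≤ B.card
    · exact expand hS A B hAS hBS hdisj hchord (by omega) (Or.inl hB3) ihgen z hzA hzB
    · have hB2 : B.card = 2 := by omega
      by_cases hA3 : 3 ≤ A.card
      · refine expand hS B A hBS hAS (fun b hb hbA => hdisj b hbA hb)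
          (fun b hb b' hb' a ha a' ha' x h1 h2 => hchord a ha a' ha' b hb b' hb' x h2 h1)
          (by omega) (Or.inl hA3) ?_ z hzB hzA
        intro B' A' hB' hA' hlt x hx1 hx2
        exact ihgen A' B' hA' hB' (by omega) x hx2 hx1
      · exact expand hS A B hAS hBS hdisj hchord (by omega) (Or.inr (by omega)) ihgen z hzA hzB

end UPSEAux
namespace UPSEAux

open SimpleGraph

variable {V : Type} {Adj : V → V → Prop} {S : Finset (ℝ × ℝ)} {f : V → ℝ × ℝ}

lemma upse_no_cross (hf : UPSE Adj S f) {x x' c d : V}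
    (hx : Adj x x' ∨ Adj x' x) (hc : Adj c d ∨ Adj d c)
    (h1 : x ≠ c) (h2 : x ≠ d) (h3 : x' ≠ c) (h4 : x' ≠ d)
    {p : ℝ × ℝ} (hp1 : p ∈ segment ℝ (f x) (f x')) (hp2 : p ∈ segment ℝ (f c) (f d)) :
    False := by
  obtain ⟨s, t, hst, hseg1, hsx⟩ :
      ∃ s t, Adj s t ∧ p ∈ segment ℝ (f s) (f t) ∧ ((s = x ∧ t = x') ∨ (s = x' ∧ t = x)) := by
    rcases hx with h | h
    · exact ⟨x, x', h, hp1, Or.inl ⟨rfl, rfl⟩⟩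
    · exact ⟨x', x, h, by rwa [segment_symm], Or.inr ⟨rfl, rfl⟩⟩
  obtain ⟨s', t', hst', hseg2, hsx'⟩ :
      ∃ s' t', Adj s' t' ∧ p ∈ segment ℝ (f s') (f t') ∧ ((s' = c ∧ t' = d) ∨ (s' = d ∧ t' = c)) := by
    rcases hc with h | h
    · exact ⟨c, d, h, hp2, Or.inl ⟨rfl, rfl⟩⟩
    · exact ⟨d, c, h, by rwa [segment_symm], Or.inr ⟨rfl, rfl⟩⟩
  have hne : (s, t) ≠ (s', t') := by
    intro he
    rw [Prod.mk.injEq] at he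
    rcases hsx with ⟨rfl, rfl⟩ | ⟨rfl, rfl⟩ <;> rcases hsx' with ⟨rfl, rfl⟩ | ⟨rfl, rfl⟩
    · exact h1 he.1
    · exact h2 he.1
    · exact h3 he.1
    · exact h4 he.1
  obtain ⟨hm1, hm2⟩ := hf.2.2.2 s t s' t' hst hst' hne p hseg1 hseg2
  have hm1' : p = f s ∨ p = f t := by simpa using hm1
  have hm2' : p = f s' ∨ p = f t' := by simpa using hm2
  have hv1 : p = f x ∨ p = f x' := by
    rcases hsx with ⟨rfl, rfl⟩ | ⟨rfl, rfl⟩ <;> tauto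
  have hv2 : p = f c ∨ p = f d := by
    rcases hsx' with ⟨rfl, rfl⟩ | ⟨rfl, rfl⟩ <;> tauto
  rcases hv1 with h | h <;> rcases hv2 with h' | h'
  · exact h1 (hf.1 (h ▸ h'))
  · exact h2 (hf.1 (h ▸ h'))
  · exact h3 (hf.1 (h ▸ h'))
  · exact h4 (hf.1 (h ▸ h'))

/-- Along any walk staying inside `C'`, the sign of the functional attached to a drawn
edge `(c, d)` outside `C'` is constant. -/
lemma sign_walk (hS : ConvexPos S) (hf : UPSE Adj S f) (C' : Set V) {c d : V}
    (hcC : c ∉ C') (hdC : d ∉ C') (hcd : (SimpleGraph.fromRel Adj).Adj c d) :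
    ∀ {x y : V} (W : (SimpleGraph.fromRel Adj).Walk x y), (∀ w ∈ W.support, w ∈ C') →
      0 < det2 (f d - f c) (f x - f c) * det2 (f d - f c) (f y - f c) := by
  have hfS : ∀ w, f w ∈ S := hf.2.1
  obtain ⟨hcdne, hcdadj⟩ := (SimpleGraph.fromRel_adj Adj c d).mp hcd
  have hσne : ∀ w : V, w ∈ C' → det2 (f d - f c) (f w - f c) ≠ 0 := by
    intro w hw
    refine det2_ne_zero_of_genpos hS.1 (hfS c) (hfS d) (hfS w) (hf.1.ne hcdne)
      (hf.1.ne (fun he => hcC (he ▸ hw))) (hf.1.ne (fun he => hdC (he ▸ hw)))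
  have hfconv : ∀ w : V, f w ∈ convexHull ℝ (↑S : Set (ℝ × ℝ)) :=
    fun w => subset_convexHull ℝ _ (Finset.mem_coe.mpr (hfS w))
  intro x y W
  induction W with
  | nil =>
    intro hsup
    have hx := hsup _ (SimpleGraph.Walk.start_mem_support _)
    exact mul_self_pos.mpr (hσne _ hx)
  | @cons x m y h W ih =>
    intro hsup
    have hx : x ∈ C' := hsup _ (SimpleGraph.Walk.start_mem_support _)
    have hm : m ∈ C' := by
      apply hsup
      rw [SimpleGraph.Walk.support_cons]
      exact List.mem_cons_of_mem _ (SimpleGraph.Walk.start_mem_support _)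
    have ihW : 0 < det2 (f d - f c) (f m - f c) * det2 (f d - f c) (f y - f c) := by
      apply ih
      intro w hw
      apply hsup
      rw [SimpleGraph.Walk.support_cons]
      exact List.mem_cons_of_mem _ hw
    obtain ⟨hxm, hxmadj⟩ := (SimpleGraph.fromRel_adj Adj x m).mp h
    have hstep : 0 < det2 (f d - f c) (f x - f c) * det2 (f d - f c) (f m - f c) := by
      rcases lt_trichotomy (det2 (f d - f c) (f x - f c) * det2 (f d - f c) (f m - f c)) 0 with
        hneg | hzero | hpos
      · exfalso
        have hcross : ∃ ζ, ζ ∈ segment ℝ (f x) (f m) ∧ ζ ∈ segment ℝ (f c) (f d) := by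
          rcases mul_neg_iff.mp hneg with ⟨h1, h2⟩ | ⟨h1, h2⟩
          · obtain ⟨ζ, hζ1, hζ2⟩ := cross_of_signs hS (hfS c) (hfS d) (hf.1.ne hcdne)
              (hfconv m) (hfconv x) h2.le h1.le
            exact ⟨ζ, by rwa [segment_symm], hζ2⟩
          · obtain ⟨ζ, hζ1, hζ2⟩ := cross_of_signs hS (hfS c) (hfS d) (hf.1.ne hcdne)
              (hfconv x) (hfconv m) h1.le h2.le
            exact ⟨ζ, hζ1, hζ2⟩
        obtain ⟨ζ, hζ1, hζ2⟩ := hcross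
        exact upse_no_cross hf hxmadj hcdadj
          (fun he => hcC (he ▸ hx)) (fun he => hdC (he ▸ hx))
          (fun he => hcC (he ▸ hm)) (fun he => hdC (he ▸ hm)) hζ1 hζ2
      · exact absurd hzero (mul_ne_zero (hσne _ hx) (hσne _ hm))
      · exact hpos
    nlinarith [mul_pos hstep ihW, mul_self_pos.mpr (hσne _ hm)]

lemma det_on_segment {D base r s ζ : ℝ × ℝ} (h : ζ ∈ segment ℝ r s) :
    ∃ τ1 τ2 : ℝ, 0 ≤ τ1 ∧ 0 ≤ τ2 ∧ τ1 + τ2 = 1 ∧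
      det2 D (ζ - base) = τ1 * det2 D (r - base) + τ2 * det2 D (s - base) := by
  obtain ⟨τ1, τ2, h1, h2, hsum, heq⟩ := h
  refine ⟨τ1, τ2, h1, h2, hsum, ?_⟩
  have hcomb : ζ - base = τ1 • (r - base) + τ2 • (s - base) := by
    linear_combination (norm := module) - heq + hsum • base
  show detL D (ζ - base) = _
  rw [hcomb, map_add, map_smul, map_smul]
  simp only [detL_apply, smul_eq_mul]

lemma sign_change {G : SimpleGraph V} (g : V → ℝ) :
    ∀ {x y : V} (W : G.Walk x y), (∀ w ∈ W.support, g w ≠ 0) → g x < 0 → 0 < g y →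
      ∃ p q, G.Adj p q ∧ p ∈ W.support ∧ q ∈ W.support ∧ g p < 0 ∧ 0 < g q := by
  intro x y W
  induction W with
  | nil =>
    intro _ h1 h2
    exact absurd h2 (not_lt.mpr h1.le)
  | @cons x m y h W ih =>
    intro hne h1 h2
    have hmW : m ∈ (SimpleGraph.Walk.cons h W).support := by
      rw [SimpleGraph.Walk.support_cons]
      exact List.mem_cons_of_mem _ (SimpleGraph.Walk.start_mem_support _)
    rcases lt_trichotomy (g m) 0 with hm | hm | hm
    · obtain ⟨p, q, hpq, hp, hq, hgp, hgq⟩ := ih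
        (fun w hw => hne w (by rw [SimpleGraph.Walk.support_cons]; exact List.mem_cons_of_mem _ hw))
        hm h2
      refine ⟨p, q, hpq, ?_, ?_, hgp, hgq⟩
      · rw [SimpleGraph.Walk.support_cons]; exact List.mem_cons_of_mem _ hp
      · rw [SimpleGraph.Walk.support_cons]; exact List.mem_cons_of_mem _ hq
    · exact absurd hm (hne m hmW)
    · exact ⟨x, m, h, SimpleGraph.Walk.start_mem_support _, hmW, h1, hm⟩

variable (Adj) (u v : V)

lemma not_reach_self : ¬ ReachAvoiding Adj u v u :=
  fun ⟨W, hW⟩ => hW W.end_mem_support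

lemma walk_in_C {a a' : V} (ha : ReachAvoiding Adj u v a) (ha' : ReachAvoiding Adj u v a') :
    ∃ W : (SimpleGraph.fromRel Adj).Walk a a',
      ∀ w ∈ W.support, ReachAvoiding Adj u v w := by
  classical
  obtain ⟨Wa, hWa⟩ := ha
  obtain ⟨Wa', hWa'⟩ := ha'
  refine ⟨Wa.reverse.append Wa', ?_⟩
  intro w hw
  rw [SimpleGraph.Walk.mem_support_append_iff] at hw
  rcases hw with hw | hw
  · rw [SimpleGraph.Walk.support_reverse, List.mem_reverse] at hw
    refine ⟨Wa.takeUntil w hw, fun hu => hWa (SimpleGraph.Walk.support_takeUntil_subset _ hw hu)⟩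
  · refine ⟨Wa'.takeUntil w hw, fun hu => hWa' (SimpleGraph.Walk.support_takeUntil_subset _ hw hu)⟩

lemma walk_avoid_C (hconn : (SimpleGraph.fromRel Adj).Connected) {b b' : V}
    (hb : ¬ ReachAvoiding Adj u v b) (hb' : ¬ ReachAvoiding Adj u v b') :
    ∃ W : (SimpleGraph.fromRel Adj).Walk b b',
      ∀ w ∈ W.support, ¬ ReachAvoiding Adj u v w := by
  classical
  obtain ⟨W0⟩ := hconn.preconnected b b'
  let P := W0.toPath
  refine ⟨P.val, ?_⟩
  intro w hw hwC
  obtain ⟨Wv, hWv⟩ := hwC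
  set T1 := P.val.takeUntil w hw with hT1
  set T2 := P.val.dropUntil w hw with hT2
  have hu1 : u ∈ T1.support := by
    by_contra hu1
    refine hb ⟨Wv.append T1.reverse, ?_⟩
    rw [SimpleGraph.Walk.mem_support_append_iff]
    rintro (h | h)
    · exact hWv h
    · rw [SimpleGraph.Walk.support_reverse, List.mem_reverse] at h
      exact hu1 h
  have hu2 : u ∈ T2.support := by
    by_contra hu2
    refine hb' ⟨Wv.append T2, ?_⟩
    rw [SimpleGraph.Walk.mem_support_append_iff]
    rintro (h | h)
    · exact hWv h
    · exact hu2 h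
  have huw : u ≠ w := by
    rintro rfl
    exact not_reach_self Adj u v ⟨Wv, hWv⟩
  have hnodup : P.val.support.Nodup := P.2.support_nodup
  rw [← SimpleGraph.Walk.take_spec P.val hw, SimpleGraph.Walk.support_append] at hnodup
  have hdisj := (List.nodup_append'.mp hnodup).2.2
  have hu2' : u ∈ T2.support.tail := by
    have := SimpleGraph.Walk.support_eq_cons T2
    rw [this] at hu2
    rcases List.mem_cons.mp hu2 with h | h
    · exact absurd h huw
    · exact h
  exact hdisj hu1 hu2'

lemma comb_pos {t1 t2 g1 g2 : ℝ} (h1 : 0 ≤ t1) (h2 : 0 ≤ t2) (hsum : t1 + t2 = 1)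
    (hg1 : 0 < g1) (hg2 : 0 < g2) : 0 < t1 * g1 + t2 * g2 := by
  rcases eq_or_lt_of_le h1 with h | h
  · have h2' : t2 = 1 := by linarith
    rw [← h, h2']; simpa
  · nlinarith

lemma det2_zero_right (D : ℝ × ℝ) : det2 D 0 = 0 := by simp [det2]

lemma chords_disjoint (hS : ConvexPos S) (hf : UPSE Adj S f)
    (hconn : (SimpleGraph.fromRel Adj).Connected) {a a' b b' : V}
    (ha : ReachAvoiding Adj u v a) (ha' : ReachAvoiding Adj u v a')
    (hb : ¬ ReachAvoiding Adj u v b) (hb' : ¬ ReachAvoiding Adj u v b')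
    {x : ℝ × ℝ} (hx1 : x ∈ segment ℝ (f a) (f a')) (hx2 : x ∈ segment ℝ (f b) (f b')) :
    False := by
  have hfS := hf.2.1
  have hinj := hf.1
  have hab : a ≠ b := fun he => hb (he ▸ ha)
  have hab' : a ≠ b' := fun he => hb' (he ▸ ha)
  have ha'b : a' ≠ b := fun he => hb (he ▸ ha')
  have ha'b' : a' ≠ b' := fun he => hb' (he ▸ ha')
  by_cases haa : a = a'
  · rw [← haa, segment_same, Set.mem_singleton_iff] at hx1
    subst hx1
    have hsub : ({f b, f b'} : Set (ℝ × ℝ)) ⊆ (↑(S.erase (f a)) : Set (ℝ × ℝ)) := by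
      rintro y (rfl | hy)
      · exact Finset.mem_coe.mpr (Finset.mem_erase.mpr ⟨hinj.ne (Ne.symm hab), hfS b⟩)
      · rw [Set.mem_singleton_iff] at hy
        subst hy
        exact Finset.mem_coe.mpr (Finset.mem_erase.mpr ⟨hinj.ne (Ne.symm hab'), hfS b'⟩)
    refine hS.2 (f a) (hfS a) (convexHull_mono hsub ?_)
    rw [convexHull_pair]
    exact hx2
  by_cases hbb : b = b'
  · rw [← hbb, segment_same, Set.mem_singleton_iff] at hx2
    subst hx2
    have hsub : ({f a, f a'} : Set (ℝ × ℝ)) ⊆ (↑(S.erase (f b)) : Set (ℝ × ℝ)) := by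
      rintro y (rfl | hy)
      · exact Finset.mem_coe.mpr (Finset.mem_erase.mpr ⟨hinj.ne hab, hfS a⟩)
      · rw [Set.mem_singleton_iff] at hy
        subst hy
        exact Finset.mem_coe.mpr (Finset.mem_erase.mpr ⟨hinj.ne ha'b, hfS a'⟩)
    refine hS.2 (f b) (hfS b) (convexHull_mono hsub ?_)
    rw [convexHull_pair]
    exact hx1
  have hfa' : f a ≠ f a' := hinj.ne haa
  set σ : V → ℝ := fun wv => det2 (f a' - f a) (f wv - f a) with hσdef
  have hσb : σ b ≠ 0 :=
    det2_ne_zero_of_genpos hS.1 (hfS a) (hfS a') (hfS b) hfa' (hinj.ne hab) (hinj.ne ha'b)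
  have hσb' : σ b' ≠ 0 :=
    det2_ne_zero_of_genpos hS.1 (hfS a) (hfS a') (hfS b') hfa' (hinj.ne hab') (hinj.ne ha'b')
  rcases lt_trichotomy (σ b * σ b') 0 with hneg | hzero | hpos
  · -- opposite signs along the avoiding walk : find a sign-changing edge
    obtain ⟨Wb, hWb⟩ := walk_avoid_C Adj u v hconn hb hb'
    have hgne : ∀ w, ¬ ReachAvoiding Adj u v w → σ w ≠ 0 := by
      intro w hw
      exact det2_ne_zero_of_genpos hS.1 (hfS a) (hfS a') (hfS w) hfa'
        (hinj.ne (fun he => hw (he ▸ ha))) (hinj.ne (fun he => hw (he ▸ ha')))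
    obtain ⟨p, q, hpq, hpC, hqC, hgp, hgq⟩ :
        ∃ p q, (SimpleGraph.fromRel Adj).Adj p q ∧ ¬ ReachAvoiding Adj u v p ∧
          ¬ ReachAvoiding Adj u v q ∧ σ p < 0 ∧ 0 < σ q := by
      rcases mul_neg_iff.mp hneg with ⟨h1, h2⟩ | ⟨h1, h2⟩
      · obtain ⟨p, q, hpq, hp, hq, hgp, hgq⟩ := sign_change σ Wb.reverse
          (by
            intro w hw
            rw [SimpleGraph.Walk.support_reverse, List.mem_reverse] at hw
            exact hgne w (hWb w hw)) h2 h1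
        rw [SimpleGraph.Walk.support_reverse, List.mem_reverse] at hp hq
        exact ⟨p, q, hpq, hWb p hp, hWb q hq, hgp, hgq⟩
      · obtain ⟨p, q, hpq, hp, hq, hgp, hgq⟩ := sign_change σ Wb
          (fun w hw => hgne w (hWb w hw)) h1 h2
        exact ⟨p, q, hpq, hWb p hp, hWb q hq, hgp, hgq⟩
    have hfconv : ∀ w : V, f w ∈ convexHull ℝ (↑S : Set (ℝ × ℝ)) :=
      fun w => subset_convexHull ℝ _ (Finset.mem_coe.mpr (hfS w))
    obtain ⟨ζ, hζ1, hζ2⟩ := cross_of_signs hS (hfS a) (hfS a') hfa'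
      (hfconv p) (hfconv q) hgp.le hgq.le
    -- ζ ∈ segment (f p) (f q) ∩ segment (f a) (f a')
    obtain ⟨Wa, hWa⟩ := walk_in_C Adj u v ha ha'
    have hconst := sign_walk hS hf {w | ReachAvoiding Adj u v w} hpC hqC hpq Wa hWa
    obtain ⟨τ1, τ2, ht1, ht2, htsum, hτeq⟩ :=
      det_on_segment (D := f q - f p) (base := f p) hζ2
    have hζ0 : det2 (f q - f p) (ζ - f p) = 0 := by
      obtain ⟨κ1, κ2, hκ1, hκ2, hκsum, hκeq⟩ :=
        det_on_segment (D := f q - f p) (base := f p) hζ1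
      rw [hκeq, sub_self, det2_zero_right, det2_self]
      ring
    rcases mul_pos_iff.mp hconst with ⟨hp1, hp2⟩ | ⟨hp1, hp2⟩
    · have := comb_pos ht1 ht2 htsum hp1 hp2
      rw [← hτeq, hζ0] at this
      exact lt_irrefl 0 this
    · have := comb_pos ht1 ht2 htsum (neg_pos.mpr hp1) (neg_pos.mpr hp2)
      have h9 : τ1 * det2 (f q - f p) (f a - f p) +
          τ2 * det2 (f q - f p) (f a' - f p) < 0 := by nlinarith
      rw [← hτeq, hζ0] at h9
      exact lt_irrefl 0 h9
  · exact absurd hzero (mul_ne_zero hσb hσb')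
  · -- same strict sign : x cannot be on both chords
    obtain ⟨τ1, τ2, ht1, ht2, htsum, hτeq⟩ :=
      det_on_segment (D := f a' - f a) (base := f a) hx2
    have hx0 : det2 (f a' - f a) (x - f a) = 0 := by
      obtain ⟨κ1, κ2, hκ1, hκ2, hκsum, hκeq⟩ :=
        det_on_segment (D := f a' - f a) (base := f a) hx1
      rw [hκeq, sub_self, det2_zero_right, det2_self]
      ring
    rcases mul_pos_iff.mp hpos with h | h
    · have := comb_pos ht1 ht2 htsum h.1 h.2
      rw [← hτeq, hx0] at this
      exact lt_irrefl 0 this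
    · have := comb_pos ht1 ht2 htsum (neg_pos.mpr h.1) (neg_pos.mpr h.2)
      have h9 : τ1 * σ b + τ2 * σ b' < 0 := by nlinarith
      rw [← hτeq] at h9
      rw [hx0] at h9
      exact lt_irrefl 0 h9

end UPSEAux

theorem components_consecutive {V : Type} [Fintype V] (Adj : V → V → Prop)
    (hT : IsDirTree Adj)
    (S : Finset (ℝ × ℝ)) (hS : ConvexPos S) (hcard : S.card = Fintype.card V)
    (u : V) (f : V → ℝ × ℝ) (hf : UPSE Adj S f) :
    ∀ v : V, v ≠ u → ConsecutiveIn (f '' {w | ReachAvoiding Adj u v w}) S := by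
  classical
  intro v hv
  have hconn : (SimpleGraph.fromRel Adj).Connected := hT.2.2.isConnected
  set Afin : Finset (ℝ × ℝ) :=
    (Finset.univ.filter fun w => ReachAvoiding Adj u v w).image f with hAfin
  set Bfin : Finset (ℝ × ℝ) :=
    (Finset.univ.filter fun w => ¬ ReachAvoiding Adj u v w).image f with hBfin
  have hAcoe : (↑Afin : Set (ℝ × ℝ)) = f '' {w | ReachAvoiding Adj u v w} := by
    ext y
    simp [hAfin]
  have hAS : Afin ⊆ S := by
    intro y hy
    rw [hAfin, Finset.mem_image] at hy
    obtain ⟨w, _, rfl⟩ := hy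
    exact hf.2.1 w
  have hBS : Bfin ⊆ S := by
    intro y hy
    rw [hBfin, Finset.mem_image] at hy
    obtain ⟨w, _, rfl⟩ := hy
    exact hf.2.1 w
  have hdisjAB : ∀ a ∈ Afin, a ∉ Bfin := by
    intro y hyA hyB
    rw [hAfin, Finset.mem_image] at hyA
    rw [hBfin, Finset.mem_image] at hyB
    obtain ⟨w1, hw1, e1⟩ := hyA
    obtain ⟨w2, hw2, e2⟩ := hyB
    rw [Finset.mem_filter] at hw1 hw2
    exact hw2.2 (hf.1 (e1.trans e2.symm) ▸ hw1.2)
  have hchord : ∀ a ∈ Afin, ∀ a' ∈ Afin, ∀ b ∈ Bfin, ∀ b' ∈ Bfin, ∀ x : ℝ × ℝ,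
      x ∈ segment ℝ a a' → x ∈ segment ℝ b b' → False := by
    intro pa hpa pa' hpa' pb hpb pb' hpb' x hx1 hx2
    rw [hAfin, Finset.mem_image] at hpa hpa'
    rw [hBfin, Finset.mem_image] at hpb hpb'
    obtain ⟨wa, hwa, rfl⟩ := hpa
    obtain ⟨wa', hwa', rfl⟩ := hpa'
    obtain ⟨wb, hwb, rfl⟩ := hpb
    obtain ⟨wb', hwb', rfl⟩ := hpb'
    rw [Finset.mem_filter] at hwa hwa' hwb hwb'
    exact UPSEAux.chords_disjoint Adj u v hS hf hconn hwa.2 hwa'.2 hwb.2 hwb'.2 hx1 hx2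
  have hdisjhulls := UPSEAux.hull_disjoint hS (Afin.card + Bfin.card) Afin Bfin le_rfl
    hAS hBS hdisjAB hchord
  have hcard2 : Afin.card + Bfin.card = S.card := by
    rw [hAfin, hBfin, Finset.card_image_of_injective _ hf.1,
      Finset.card_image_of_injective _ hf.1,
      Finset.card_filter_add_card_filter_not, Finset.card_univ, hcard]
  have hunion : Afin ∪ Bfin = S := by
    apply Finset.eq_of_subset_of_card_le (Finset.union_subset hAS hBS)
    rw [Finset.card_union_of_disjoint (Finset.disjoint_left.mpr hdisjAB)]
    omega
  have hBset : (↑S : Set (ℝ × ℝ)) \ (f '' {w | ReachAvoiding Adj u v w}) = ↑Bfin := by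
    ext y
    constructor
    · rintro ⟨hyS, hyA⟩
      have hy2 : y ∈ Afin ∪ Bfin := by
        rw [hunion]
        exact Finset.mem_coe.mp hyS
      rcases Finset.mem_union.mp hy2 with h | h
      · exact absurd (hAcoe ▸ Finset.mem_coe.mpr h) hyA
      · exact Finset.mem_coe.mpr h
    · intro hyB
      have hyB' : y ∈ Bfin := Finset.mem_coe.mp hyB
      refine ⟨Finset.mem_coe.mpr (hBS hyB'), ?_⟩
      intro hyA
      rw [← hAcoe] at hyA
      exact hdisjAB y (Finset.mem_coe.mp hyA) hyB'
  have hABdisj : Disjoint (convexHull ℝ (↑Bfin : Set (ℝ × ℝ)))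
      (convexHull ℝ (↑Afin : Set (ℝ × ℝ))) :=
    Set.disjoint_left.mpr (fun z hzB hzA => (hdisjhulls z hzA hzB).elim)
  obtain ⟨g, c1, c2, hgB, hc12, hgA⟩ := geometric_hahn_banach_compact_closed
    (convex_convexHull ℝ _) (Bfin.finite_toSet.isCompact_convexHull ℝ)
    (convex_convexHull ℝ _) (Afin.finite_toSet.isClosed_convexHull ℝ) hABdisj
  refine ⟨g.toLinearMap, c2, ?_, ?_⟩
  · intro pt hpt
    rw [← hAcoe] at hpt
    exact hgA pt (subset_convexHull ℝ _ hpt)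
  · intro pt hpt
    rw [hBset] at hpt
    have := hgB pt (subset_convexHull ℝ _ hpt)
    calc (g.toLinearMap pt : ℝ) = g pt := rfl
      _ < c1 := this
      _ < c2 := hc12
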